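/- Monotonicity of A-perfect stable matchings in quota-restricted instances: given a flexible-quotas instance with positive integer costs, for t ≤ t', if the Hospital/Residents instance G_t with quotas q_t(p) = ⌊t / c(p)⌋ admits an A-perfect stable matching, then the instance G_{t'} with quotas q_{t'}(p) = ⌊t' / c(p)⌋ also admits an A-perfect stable matching. -/

import Mathlib

/-- Standard Hospital/Residents stability for a (partial) matching `M` with quotas `q`:
`M` is a matching along the edges respecting quotas, and no pair `(a,p)` blocks it,
where `(a,p)` blocks if `a` prefers `p` to `M(a)` (unmatched agents prefer anything
acceptable) and `p` is under-subscribed or prefers `a` to some agent matched to it. -/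
def HRStable {A P : Type*} [Fintype A] [DecidableEq P]
    (list : A → Finset P) (rankA : A → P → ℕ) (rankP : P → A → ℕ)
    (q : P → ℕ) (M : A → Option P) : Prop :=
  (∀ a p, M a = some p → p ∈ list a) ∧
  (∀ p, (Finset.univ.filter (fun a => M a = some p)).card ≤ q p) ∧
  ¬ ∃ a p, p ∈ list a ∧ M a ≠ some p ∧
    (∀ r, M a = some r → rankA a p < rankA a r) ∧
    ((Finset.univ.filter (fun a' => M a' = some p)).card < q p ∨
      ∃ a', M a' = some p ∧ rankP p a < rankP p a')

set_option linter.unusedSectionVars false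
set_option linter.unusedVariables false

lemma rank_exists {A : Type*} [DecidableEq A] (k : ℕ) :
    ∀ (W : Finset A) (f : A → ℕ), Set.InjOn f W → k < W.card →
    ∃ b ∈ W, (W.filter fun c => f c < f b).card = k := by
  induction k with
  | zero =>
    intro W f hf hk
    obtain ⟨b, hb, hmin⟩ := Finset.exists_min_image W f (Finset.card_pos.mp hk)
    refine ⟨b, hb, ?_⟩
    rw [Finset.card_eq_zero, Finset.filter_eq_empty_iff]
    intro c hc
    exact not_lt.mpr (hmin c hc)
  | succ k ih =>
    intro W f hf hk
    obtain ⟨m, hm, hmin⟩ := Finset.exists_min_image W f (Finset.card_pos.mp (by omega))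
    have hW' : k < (W.erase m).card := by rw [Finset.card_erase_of_mem hm]; omega
    obtain ⟨b, hb, hcard⟩ := ih (W.erase m) f
      (hf.mono (by intro x hx; exact Finset.mem_of_mem_erase hx)) hW'
    have hbW : b ∈ W := Finset.mem_of_mem_erase hb
    have hbm : b ≠ m := Finset.ne_of_mem_erase hb
    have hfm : f m < f b :=
      lt_of_le_of_ne (hmin b hbW) (fun he => hbm (hf hbW hm he.symm))
    refine ⟨b, hbW, ?_⟩
    have heq : W.filter (fun c => f c < f b) =
        insert m ((W.erase m).filter fun c => f c < f b) := by
      ext c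
      simp only [Finset.mem_filter, Finset.mem_insert, Finset.mem_erase]
      constructor
      · rintro ⟨hcW, hcf⟩
        by_cases hcm : c = m
        · exact Or.inl hcm
        · exact Or.inr ⟨⟨hcm, hcW⟩, hcf⟩
      · rintro (rfl | ⟨⟨_, hcW⟩, hcf⟩)
        · exact ⟨hm, hfm⟩
        · exact ⟨hcW, hcf⟩
    rw [heq, Finset.card_insert_of_notMem (by simp), hcard]

theorem exists_stable {A P : Type*} [Fintype A] [DecidableEq P]
    (list : A → Finset P) (RA : A → P → ℕ) (RP : P → A → ℕ) (q : P → ℕ)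
    (hRA : ∀ a, Set.InjOn (RA a) (list a : Set P))
    (hRP : ∀ p, Function.Injective (RP p)) :
    ∃ M : A → Option P, HRStable list RA RP q M := by
  classical
  set E : Set (A × P) := {e | e.2 ∈ list e.1} with hE
  set RejA : Set (A × P) → Set (A × P) :=
    fun X => {e | ∃ p', (e.1, p') ∈ X ∧ RA e.1 p' < RA e.1 e.2} with hRejA
  set cnt : Set (A × P) → P → A → ℕ :=
    fun Y p a => (Finset.univ.filter fun b => (b, p) ∈ Y ∧ RP p b < RP p a).card with hcnt
  set RejP : Set (A × P) → Set (A × P) := fun Y => {e | q e.2 ≤ cnt Y e.2 e.1} with hRejP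
  have cnt_mono : ∀ Y Y' p a, Y ⊆ Y' → cnt Y p a ≤ cnt Y' p a := by
    intro Y Y' p a hYY
    apply Finset.card_le_card
    intro b hb
    simp only [Finset.mem_filter] at *
    exact ⟨hb.1, hYY hb.2.1, hb.2.2⟩
  have Hmono : Monotone (fun X => E \ RejP (E \ RejA X)) := by
    intro X X' hXX
    have h1 : RejA X ⊆ RejA X' := by
      rintro e ⟨p', hp', hlt⟩; exact ⟨p', hXX hp', hlt⟩
    have h2 : E \ RejA X' ⊆ E \ RejA X := fun e he => ⟨he.1, fun hc => he.2 (h1 hc)⟩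
    intro e he
    exact ⟨he.1, fun hc => he.2 (le_trans hc (cnt_mono _ _ _ _ h2))⟩
  set H : Set (A × P) →o Set (A × P) := ⟨fun X => E \ RejP (E \ RejA X), Hmono⟩ with hH
  set X : Set (A × P) := OrderHom.lfp H with hXdef
  have hfix : H X = X := OrderHom.map_lfp H
  set Y : Set (A × P) := E \ RejA X with hYdef
  have hX : X = E \ RejP Y := hfix.symm
  -- basic memberships
  have hXE : X ⊆ E := by rw [hX]; exact Set.diff_subset
  have hYE : Y ⊆ E := Set.diff_subset
  have hXnotRejP : ∀ e, e ∈ X → ¬ e ∈ RejP Y := by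
    intro e he; rw [hX] at he; exact he.2
  have hYnotRejA : ∀ e, e ∈ Y → ¬ e ∈ RejA X := fun e he => he.2
  -- uniqueness per agent
  have uniq : ∀ a p p', (a, p) ∈ X ∩ Y → (a, p') ∈ X ∩ Y → p = p' := by
    intro a p p' hp hp'
    by_contra hne
    have hpl : p ∈ list a := hXE hp.1
    have hpl' : p' ∈ list a := hXE hp'.1
    have hne2 : RA a p ≠ RA a p' := fun he => hne (hRA a hpl hpl' he)
    rcases lt_or_gt_of_ne hne2 with hlt | hgt
    · exact hYnotRejA _ hp'.2 ⟨p, hp.1, hlt⟩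
    · exact hYnotRejA _ hp.2 ⟨p', hp'.1, hgt⟩
  set M : A → Option P := fun a =>
    if h : ∃ p, (a, p) ∈ X ∩ Y then some h.choose else none with hM
  have mem_iff : ∀ a p, M a = some p ↔ (a, p) ∈ X ∩ Y := by
    intro a p
    constructor
    · intro h
      by_cases he : ∃ p', (a, p') ∈ X ∩ Y
      · have hMa : M a = some he.choose := by rw [hM]; exact dif_pos he
        rw [hMa] at h
        obtain rfl := Option.some_inj.mp h
        exact he.choose_spec
      · have hMa : M a = none := by rw [hM]; exact dif_neg he
        rw [hMa] at h; cases h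
    · intro h
      have he : ∃ p', (a, p') ∈ X ∩ Y := ⟨p, h⟩
      have hMa : M a = some he.choose := by rw [hM]; exact dif_pos he
      rw [hMa, Option.some_inj]
      exact uniq a he.choose p he.choose_spec h
  -- kept iff
  have kept_iff : ∀ a p, (a, p) ∈ X ∩ Y ↔ ((a, p) ∈ Y ∧ cnt Y p a < q p) := by
    intro a p
    constructor
    · intro h
      refine ⟨h.2, ?_⟩
      have := hXnotRejP _ h.1
      simpa [hRejP] using this
    · rintro ⟨hY2, hlt⟩
      refine ⟨?_, hY2⟩
      rw [hX]
      exact ⟨hYE hY2, by simp only [hRejP, Set.mem_setOf_eq]; omega⟩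
  have cnt_lt_cnt : ∀ a b p, (a, p) ∈ Y → RP p a < RP p b → cnt Y p a < cnt Y p b := by
    intro a b p haY hab
    apply Finset.card_lt_card
    rw [Finset.ssubset_iff_of_subset]
    · exact ⟨a, by simp [haY, hab], by simp⟩
    · intro c hc
      simp only [Finset.mem_filter, Finset.mem_univ, true_and] at *
      exact ⟨hc.1, lt_trans hc.2 hab⟩
  have cnt_le_cnt : ∀ a b p, RP p a < RP p b → cnt Y p a ≤ cnt Y p b := by
    intro a b p hab
    apply Finset.card_le_card
    intro c hc
    simp only [Finset.mem_filter, Finset.mem_univ, true_and] at *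
    exact ⟨hc.1, lt_trans hc.2 hab⟩
  have Mset_eq : ∀ p, (Finset.univ.filter fun a => M a = some p) =
      (Finset.univ.filter fun a => (a, p) ∈ X ∩ Y) := by
    intro p
    apply Finset.filter_congr
    intro a _
    simp [mem_iff a p]
  -- quota
  have quota : ∀ p, (Finset.univ.filter fun a => M a = some p).card ≤ q p := by
    intro p
    rw [Mset_eq p, ← Finset.card_range (q p)]
    apply Finset.card_le_card_of_injOn (fun a => cnt Y p a)
    · intro a ha
      simp only [Finset.mem_coe, Finset.mem_filter, Finset.mem_univ, true_and] at ha
      simp only [Finset.mem_coe, Finset.mem_range]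
      exact ((kept_iff a p).mp ha).2
    · intro a ha b hb hab
      simp only [Finset.coe_filter, Set.mem_setOf_eq, Finset.mem_univ, true_and] at ha hb
      by_contra hne
      have : RP p a ≠ RP p b := fun he => hne (hRP p he)
      rcases lt_or_gt_of_ne this with hlt | hgt
      · exact absurd hab (Nat.ne_of_lt (cnt_lt_cnt a b p ha.2 hlt))
      · exact absurd hab.symm (Nat.ne_of_lt (cnt_lt_cnt b a p hb.2 hgt))
  -- fullness when some edge is RejP'd
  have full : ∀ a p, q p ≤ cnt Y p a →
      q p ≤ (Finset.univ.filter fun a' => M a' = some p).card := by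
    intro a p hq
    rw [Mset_eq p, ← Finset.card_range (q p)]
    set W : Finset A := Finset.univ.filter (fun b => (b, p) ∈ Y) with hW
    have hWinj : Set.InjOn (RP p) W := fun x _ y _ h => hRP p h
    have hcnt_eq : ∀ b, cnt Y p b = (W.filter fun c => RP p c < RP p b).card := by
      intro b
      simp only [hcnt]
      congr 1
      ext c
      simp [hW, Finset.mem_filter]
    have hcard : q p ≤ W.card := by
      refine le_trans hq ?_
      rw [hcnt_eq a]
      exact Finset.card_le_card (Finset.filter_subset _ _)
    apply Finset.card_le_card_of_surjOn (fun a' => cnt Y p a')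
    intro k hk
    simp only [Finset.coe_range, Set.mem_Iio] at hk
    obtain ⟨b, hbW, hbcard⟩ := rank_exists k W (RP p) hWinj (lt_of_lt_of_le hk hcard)
    have hbY : (b, p) ∈ Y := by
      rw [hW] at hbW
      simp only [Finset.mem_filter] at hbW
      exact hbW.2
    have hbcnt : cnt Y p b = k := by rw [hcnt_eq b]; exact hbcard
    refine ⟨b, ?_, hbcnt⟩
    simp only [Finset.coe_filter, Set.mem_setOf_eq, Finset.mem_univ, true_and]
    exact (kept_iff b p).mpr ⟨hbY, by omega⟩
  refine ⟨M, ?_, quota, ?_⟩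
  · intro a p h
    exact hXE ((mem_iff a p).mp h).1
  · rintro ⟨a, p, hpl, hMne, hpref, hblock⟩
    have heE : (a, p) ∈ E := hpl
    by_cases hx : (a, p) ∈ X
    · by_cases hy : (a, p) ∈ Y
      · exact hMne ((mem_iff a p).mpr ⟨hx, hy⟩)
      · -- (a,p) ∈ RejA X, so a holds something better in M
        have hrej : (a, p) ∈ RejA X := by
          by_contra hc
          exact hy ⟨heE, hc⟩
        obtain ⟨p₁, hp₁X, hp₁lt⟩ := hrej
        set Fa : Finset P := (list a).filter (fun p' => (a, p') ∈ X) with hFa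
        have hp₁Fa : p₁ ∈ Fa := by
          simp only [hFa, Finset.mem_filter]
          exact ⟨hXE hp₁X, hp₁X⟩
        obtain ⟨ps, hpsFa, hpsmin⟩ := Finset.exists_min_image Fa (RA a) ⟨p₁, hp₁Fa⟩
        simp only [hFa, Finset.mem_filter] at hpsFa
        have hpsY : (a, ps) ∈ Y := by
          refine ⟨hpsFa.1, ?_⟩
          rintro ⟨p₂, hp₂X, hp₂lt⟩
          have hp₂Fa : p₂ ∈ Fa := by
            simp only [hFa, Finset.mem_filter]
            exact ⟨hXE hp₂X, hp₂X⟩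
          exact absurd (hpsmin p₂ hp₂Fa) (not_le.mpr hp₂lt)
        have hMa : M a = some ps := (mem_iff a ps).mpr ⟨hpsFa.2, hpsY⟩
        have h1 : RA a p < RA a ps := hpref ps hMa
        have h2 : RA a ps ≤ RA a p₁ := hpsmin p₁ hp₁Fa
        have h3 : RA a p₁ < RA a p := hp₁lt
        omega
    · -- (a,p) ∈ RejP Y
      have hrej : (a, p) ∈ RejP Y := by
        by_contra hc
        exact hx (hX ▸ ⟨heE, hc⟩)
      have hq : q p ≤ cnt Y p a := hrej
      rcases hblock with hunder | ⟨a', hMa', hlt⟩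
      · exact absurd (full a p hq) (not_le.mpr hunder)
      · have ha' : (a', p) ∈ X ∩ Y := (mem_iff a' p).mp hMa'
        have h1 : cnt Y p a ≤ cnt Y p a' := cnt_le_cnt a a' p hlt
        have h2 : cnt Y p a' < q p := ((kept_iff a' p).mp ha').2
        omega

/-- auxiliary closure used in the comparative-statics argument -/
inductive HRReach {A P : Type*} (M' : A → Option P) (m : A → P) : A → Prop
  | base (a : A) : M' a = none → HRReach M' m a
  | step (a b : A) : HRReach M' m b → M' a = some (m b) → m a ≠ m b → HRReach M' m a

theorem perfect_mono {A P : Type*} [Fintype A] [DecidableEq P]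
    (list : A → Finset P) (RA : A → P → ℕ) (RP : P → A → ℕ)
    (hRA : ∀ a, Set.InjOn (RA a) (list a : Set P))
    (hRP : ∀ p, Function.Injective (RP p))
    (q q' : P → ℕ) (hq : ∀ p, q p ≤ q' p)
    (M M' : A → Option P)
    (hM : HRStable list RA RP q M) (hMp : ∀ a, (M a).isSome)
    (hM' : HRStable list RA RP q' M') : ∀ a, (M' a).isSome := by
  classical
  by_contra hcon
  push_neg at hcon
  obtain ⟨a₀, ha₀⟩ := hcon
  have ha0 : M' a₀ = none := by
    cases h : M' a₀ with
    | none => rfl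
    | some p => exact absurd (by rw [h]; rfl) ha₀
  set m : A → P := fun a => (M a).get (hMp a) with hm
  have hmM : ∀ a, M a = some (m a) := fun a => (Option.some_get (hMp a)).symm
  have hml : ∀ a, m a ∈ list a := fun a => hM.1 a (m a) (hmM a)
  -- Good : reached agents strictly prefer their M-partner in M'
  have good : ∀ a, HRReach M' m a →
      M' a = none ∨ ∃ p', M' a = some p' ∧ p' ≠ m a ∧ RA a (m a) < RA a p' := by
    intro a h
    induction h with
    | base a ha => exact Or.inl ha
    | step a b hb hab hne ih =>
      -- first: fullness and preference facts at p := m b for agent b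
      right
      refine ⟨m b, hab, Ne.symm hne, ?_⟩
      -- b's pair (b, m b): derive that all of M'(m b) is RP-better than b
      have hbfacts : ∀ c, M' c = some (m b) → RP (m b) c < RP (m b) b := by
        intro c hc
        by_contra hge
        apply hM'.2.2
        refine ⟨b, m b, hml b, ?_, ?_, Or.inr ⟨c, hc, ?_⟩⟩
        · -- M' b ≠ some (m b)
          rcases ih with h0 | ⟨p', hp', hpne, _⟩
          · rw [h0]; simp
          · rw [hp']; simpa using hpne
        · intro r hr
          rcases ih with h0 | ⟨p', hp', hpne, hplt⟩
          · rw [h0] at hr; cases hr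
          · rw [hp'] at hr
            obtain rfl := Option.some_inj.mp hr
            exact hplt
        · -- RP (m b) b < RP (m b) c
          have hbc : c ≠ b := by
            intro he
            subst he
            rcases ih with h0 | ⟨p', hp', hpne, _⟩
            · rw [h0] at hc; cases hc
            · rw [hp'] at hc; exact hpne (Option.some_inj.mp hc)
          have : RP (m b) b ≠ RP (m b) c := fun he => hbc (hRP (m b) he.symm)
          omega
      have hlt : RP (m b) a < RP (m b) b := hbfacts a hab
      -- now use stability of M to conclude a prefers m a over m b
      by_contra hnot
      have hpl : m b ∈ list a := hM'.1 a (m b) hab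
      have hRAne : RA a (m a) ≠ RA a (m b) := fun he => hne (hRA a (hml a) hpl he)
      have hgt : RA a (m b) < RA a (m a) := by omega
      apply hM.2.2
      refine ⟨a, m b, hpl, by rw [hmM a]; simpa using hne, (fun r hr => by
        rw [hmM a] at hr; obtain rfl := Option.some_inj.mp hr; exact hgt),
        Or.inr ⟨b, hmM b, hlt⟩⟩
  -- fullness of programs m a for reached a
  have fullR : ∀ a, HRReach M' m a →
      (Finset.univ.filter fun b => M' b = some (m a)).card = q' (m a) := by
    intro a h
    have hfull : ¬ ((Finset.univ.filter fun b => M' b = some (m a)).card < q' (m a)) := by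
      intro hunder
      apply hM'.2.2
      rcases good a h with h0 | ⟨p', hp', hpne, hplt⟩
      · exact ⟨a, m a, hml a, by rw [h0]; simp, (fun r hr => by rw [h0] at hr; cases hr),
          Or.inl hunder⟩
      · exact ⟨a, m a, hml a, by rw [hp']; simpa using hpne, (fun r hr => by
          rw [hp'] at hr; obtain rfl := Option.some_inj.mp hr; exact hplt), Or.inl hunder⟩
    exact le_antisymm (hM'.2.1 (m a)) (by omega)
  -- the counting argument
  set RS : Finset A := Finset.univ.filter (fun a => HRReach M' m a) with hRS
  set Q : Finset P := RS.image m with hQ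
  have hQfull : ∀ p ∈ Q, (Finset.univ.filter fun b => M' b = some p).card = q' p := by
    intro p hp
    rw [hQ] at hp
    obtain ⟨b, hb, rfl⟩ := Finset.mem_image.mp hp
    rw [hRS] at hb
    exact fullR b (Finset.mem_filter.mp hb).2
  set T : Finset A := Q.biUnion (fun p => Finset.univ.filter fun b => M' b = some p) with hT
  set U : Finset A := Q.biUnion (fun p => Finset.univ.filter fun b => M b = some p) with hU
  have hTU : T ⊆ U := by
    intro a ha
    rw [hT, Finset.mem_biUnion] at ha
    obtain ⟨p, hpQ, hap⟩ := ha
    simp only [Finset.mem_filter, Finset.mem_univ, true_and] at hap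
    rw [hU, Finset.mem_biUnion]
    by_cases hma : m a = p
    · exact ⟨p, hpQ, by simp [← hma, hmM a]⟩
    · -- a is reached by step
      rw [hQ, Finset.mem_image] at hpQ
      obtain ⟨b, hb, rfl⟩ := hpQ
      rw [hRS, Finset.mem_filter] at hb
      have hra : HRReach M' m a := HRReach.step a b hb.2 hap hma
      refine ⟨m a, ?_, by simp [hmM a]⟩
      rw [hQ, Finset.mem_image]
      exact ⟨a, by rw [hRS, Finset.mem_filter]; exact ⟨Finset.mem_univ a, hra⟩, rfl⟩
  have hTcard : T.card = ∑ p ∈ Q, q' p := by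
    rw [hT, Finset.card_biUnion]
    · exact Finset.sum_congr rfl (fun p hp => hQfull p hp)
    · intro p hp r hr hpr
      rw [Function.onFun, Finset.disjoint_left]
      intro b hb1 hb2
      simp only [Finset.mem_filter, Finset.mem_univ, true_and] at hb1 hb2
      rw [hb1] at hb2
      exact hpr (Option.some_inj.mp hb2)
  have hUcard : U.card ≤ ∑ p ∈ Q, q' p := by
    rw [hU]
    refine le_trans Finset.card_biUnion_le ?_
    exact Finset.sum_le_sum (fun p _ => le_trans (hM.2.1 p) (hq p))
  have hUT : U.card ≤ T.card := by rw [hTcard]; exact hUcard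
  have hTeqU : T = U := Finset.eq_of_subset_of_card_le hTU hUT
  have hra₀ : HRReach M' m a₀ := HRReach.base a₀ ha0
  have ha₀U : a₀ ∈ U := by
    rw [hU, Finset.mem_biUnion]
    refine ⟨m a₀, ?_, by simp [hmM a₀]⟩
    rw [hQ, Finset.mem_image]
    exact ⟨a₀, by rw [hRS, Finset.mem_filter]; exact ⟨Finset.mem_univ _, hra₀⟩, rfl⟩
  rw [← hTeqU, hT, Finset.mem_biUnion] at ha₀U
  obtain ⟨p, _, hap⟩ := ha₀U
  simp only [Finset.mem_filter, Finset.mem_univ, true_and] at hap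
  rw [ha0] at hap
  cases hap

lemma mul_add_lt {x y i j d : ℕ} (hi : i < d) (hx : x < y) : x * d + i < y * d + j :=
  calc x * d + i < x * d + d := by omega
  _ = (x + 1) * d := by ring
  _ ≤ y * d := Nat.mul_le_mul_right d hx
  _ ≤ y * d + j := Nat.le_add_right _ _

lemma aux_mul {x y i j d : ℕ} (hi : i < d) (hj : j < d) (h : x * d + i = y * d + j) :
    x = y ∧ i = j := by
  have hxy : x = y := by
    rcases lt_trichotomy x y with hlt | he | hgt
    · exact absurd h (Nat.ne_of_lt (mul_add_lt hi hlt))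
    · exact he
    · exact absurd h.symm (Nat.ne_of_lt (mul_add_lt hj hgt))
  subst hxy
  exact ⟨rfl, Nat.add_left_cancel h⟩

noncomputable def refRA {A P : Type*} [DecidableEq P]
    (list : A → Finset P) (rankA : A → P → ℕ) (M : A → Option P) : A → P → ℕ :=
  fun a p => (rankA a p * 2 + (if M a = some p then 0 else 1)) * ((list a).card + 1) +
    (if h : p ∈ list a then ((list a).equivFin ⟨p, h⟩ : Fin (list a).card).val else 0)

noncomputable def refRP {A P : Type*} [Fintype A] [DecidableEq P]
    (rankP : P → A → ℕ) (M : A → Option P) : P → A → ℕ :=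
  fun p a => (rankP p a * 2 + (if M a = some p then 0 else 1)) * (Fintype.card A + 1) +
    (Fintype.equivFin A a).val

section refined
variable {A P : Type*} [Fintype A] [DecidableEq P]
  (list : A → Finset P) (rankA : A → P → ℕ) (rankP : P → A → ℕ) (M : A → Option P)

lemma idx_lt (a : A) (p : P) :
    (if h : p ∈ list a then ((list a).equivFin ⟨p, h⟩ : Fin (list a).card).val else 0)
      < (list a).card + 1 := by
  split
  · exact lt_trans (Fin.is_lt _) (Nat.lt_succ_self _)
  · omega

lemma refRA_strict {a : A} {p r : P} (hp : p ∈ list a) (hr : r ∈ list a)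
    (h : rankA a p < rankA a r) : refRA list rankA M a p < refRA list rankA M a r := by
  unfold refRA
  apply mul_add_lt (idx_lt list a p)
  have h1 : (if M a = some p then 0 else 1) ≤ 1 := by split <;> omega
  have h2 : (0:ℕ) ≤ (if M a = some r then 0 else 1) := Nat.zero_le _
  omega

lemma refRA_favor {a : A} {p r : P} (hM : M a = some r) (hne : p ≠ r)
    (h : rankA a p = rankA a r) : refRA list rankA M a r < refRA list rankA M a p := by
  unfold refRA
  apply mul_add_lt (idx_lt list a r)
  have hif1 : (if M a = some r then 0 else 1) = 0 := if_pos hM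
  have hif2 : (if M a = some p then 0 else 1) = 1 := by
    apply if_neg
    intro he
    rw [hM] at he
    exact hne (Option.some_inj.mp he).symm
  rw [hif1, hif2, h]
  omega

lemma refRA_inj (a : A) : Set.InjOn (refRA list rankA M a) (list a : Set P) := by
  intro p hp r hr h
  unfold refRA at h
  simp only [Finset.mem_coe] at hp hr
  obtain ⟨h1, h2⟩ := aux_mul (idx_lt list a p) (idx_lt list a r) h
  rw [dif_pos hp, dif_pos hr] at h2
  have : ((list a).equivFin ⟨p, hp⟩) = ((list a).equivFin ⟨r, hr⟩) := Fin.ext h2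
  have := (list a).equivFin.injective this
  exact Subtype.mk_eq_mk.mp this

lemma refRP_strict {p : P} {a b : A} (h : rankP p a < rankP p b) :
    refRP rankP M p a < refRP rankP M p b := by
  unfold refRP
  apply mul_add_lt (Nat.lt_succ_of_lt (Fin.is_lt _))
  have h1 : (if M a = some p then 0 else 1) ≤ 1 := by split <;> omega
  have h2 : (0:ℕ) ≤ (if M b = some p then 0 else 1) := Nat.zero_le _
  omega

lemma refRP_favor {p : P} {a b : A} (hA : M a = some p) (hB : M b ≠ some p)
    (h : rankP p a = rankP p b) : refRP rankP M p a < refRP rankP M p b := by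
  unfold refRP
  apply mul_add_lt (Nat.lt_succ_of_lt (Fin.is_lt _))
  simp only [if_pos hA, if_neg hB]
  omega

lemma refRP_inj (p : P) : Function.Injective (refRP rankP M p) := by
  intro a b h
  unfold refRP at h
  obtain ⟨h1, h2⟩ := aux_mul (Nat.lt_succ_of_lt (Fin.is_lt _)) (Nat.lt_succ_of_lt (Fin.is_lt _)) h
  exact (Fintype.equivFin A).injective (Fin.ext h2)

lemma refine_keeps_stable {q : P → ℕ}
    (hM : HRStable list rankA rankP q M) (hMp : ∀ a, (M a).isSome) :
    HRStable list (refRA list rankA M) (refRP rankP M) q M := by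
  obtain ⟨h1, h2, h3⟩ := hM
  refine ⟨h1, h2, ?_⟩
  rintro ⟨a, p, hpl, hne, hpref, hblock⟩
  apply h3
  obtain ⟨r, hr⟩ : ∃ r, M a = some r := Option.isSome_iff_exists.mp (hMp a)
  have hrl : r ∈ list a := h1 a r hr
  have hpr : p ≠ r := fun he => hne (he ▸ hr)
  have hA : rankA a p < rankA a r := by
    have hlt := hpref r hr
    by_contra hge
    push_neg at hge
    rcases Nat.lt_or_ge (rankA a r) (rankA a p) with h' | h'
    · exact absurd hlt (not_lt.mpr (le_of_lt (refRA_strict list rankA M hrl hpl h')))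
    · have heq : rankA a p = rankA a r := le_antisymm h' hge
      exact absurd hlt (not_lt.mpr (le_of_lt (refRA_favor list rankA M hr hpr heq)))
  refine ⟨a, p, hpl, hne, (fun r' hr' => by
    rw [hr] at hr'; obtain rfl := Option.some_inj.mp hr'; exact hA), ?_⟩
  rcases hblock with hunder | ⟨a', ha', hlt⟩
  · exact Or.inl hunder
  · refine Or.inr ⟨a', ha', ?_⟩
    by_contra hge
    push_neg at hge
    rcases Nat.lt_or_ge (rankP p a') (rankP p a) with h' | h'
    · exact absurd hlt (not_lt.mpr (le_of_lt (refRP_strict rankP M h')))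
    · have heq : rankP p a' = rankP p a := le_antisymm hge h'
      have : M a ≠ some p := hne
      exact absurd hlt (not_lt.mpr (le_of_lt (refRP_favor rankP M ha' this heq)))

lemma refined_to_orig {q : P → ℕ} {M' : A → Option P}
    (h : HRStable list (refRA list rankA M) (refRP rankP M) q M') :
    HRStable list rankA rankP q M' := by
  obtain ⟨h1, h2, h3⟩ := h
  refine ⟨h1, h2, ?_⟩
  rintro ⟨a, p, hpl, hne, hpref, hblock⟩
  apply h3
  refine ⟨a, p, hpl, hne, (fun r hr =>
    refRA_strict list rankA M hpl (h1 a r hr) (hpref r hr)), ?_⟩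
  rcases hblock with hunder | ⟨a', ha', hlt⟩
  · exact Or.inl hunder
  · exact Or.inr ⟨a', ha', refRP_strict rankP M hlt⟩

end refined


/-- Monotonicity of A-perfect stable matchings in the quota-restricted instances `G_t`:
with positive integer costs, if `t ≤ t'` and the HR instance with quotas `⌊t/c(p)⌋`
admits an A-perfect stable matching, then so does the instance with quotas `⌊t'/c(p)⌋`. -/
theorem stmt6 {A P : Type*} [Fintype A] [DecidableEq P]
    (list : A → Finset P) (rankA : A → P → ℕ) (rankP : P → A → ℕ)
    (c : P → ℕ) (hc : ∀ p, 0 < c p)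
    (t t' : ℕ) (htt : t ≤ t')
    (h : ∃ M : A → Option P,
      HRStable list rankA rankP (fun p => t / c p) M ∧ ∀ a, (M a).isSome) :
    ∃ M' : A → Option P,
      HRStable list rankA rankP (fun p => t' / c p) M' ∧ ∀ a, (M' a).isSome := by
  obtain ⟨M, hMs, hMp⟩ := h
  have hq : ∀ p, t / c p ≤ t' / c p := fun p => Nat.div_le_div_right htt
  have h1 : HRStable list (refRA list rankA M) (refRP rankP M) (fun p => t / c p) M :=
    refine_keeps_stable list rankA rankP M hMs hMp
  obtain ⟨M', hM's⟩ := exists_stable list (refRA list rankA M) (refRP rankP M)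
    (fun p => t' / c p) (refRA_inj list rankA M) (refRP_inj rankP M)
  have hperf : ∀ a, (M' a).isSome :=
    perfect_mono list (refRA list rankA M) (refRP rankP M)
      (refRA_inj list rankA M) (refRP_inj rankP M)
      (fun p => t / c p) (fun p => t' / c p) hq M M' h1 hMp hM's
  exact ⟨M', refined_to_orig list rankA rankP M hM's, hperf⟩
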